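/- Let R = K[x,y,z] with K an F-finite field of characteristic p > 3, f = x³ + y³ + z³, and m = (x,y,z). Then (m^{[p]} : f^{p−1}) = m if p ≡ 1 mod 3, and (m^{[p]} : f^{p−1}) = R if p ≡ 2 mod 3. -/

import Mathlib

/-- The `q`-th Frobenius power `I^{[q]}` of an ideal: the ideal generated by `q`-th powers
of elements of `I`. -/
def frobPow {R : Type*} [CommRing R] (I : Ideal R) (q : ℕ) : Ideal R :=
  Ideal.span ((fun x => x ^ q) '' (I : Set R))

open MvPolynomial Finset

namespace Stmt19Aux

variable {K : Type*} [Field K]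

/-- exponent vector `(3k₀, 3k₁, 3k₂)` -/
noncomputable def D (k : Fin 3 → ℕ) : Fin 3 →₀ ℕ := Finsupp.equivFunOnFinite.symm (fun i => 3 * k i)

lemma D_apply (k : Fin 3 → ℕ) (i : Fin 3) : D k i = 3 * k i := rfl

lemma monomial_D (k : Fin 3 → ℕ) :
    (monomial (D k) (1 : K)) = ∏ i : Fin 3, X i ^ (3 * k i) := by
  have h : D k = Finsupp.single 0 (3 * k 0) + Finsupp.single 1 (3 * k 1)
      + Finsupp.single 2 (3 * k 2) := by
    ext i; fin_cases i <;> simp [D_apply, Finsupp.single_apply]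
  rw [Fin.prod_univ_three, h, X_pow_eq_monomial, X_pow_eq_monomial, X_pow_eq_monomial,
    monomial_mul, monomial_mul, one_mul, one_mul]

lemma fpow (n : ℕ) :
    ((X 0 ^ 3 + X 1 ^ 3 + X 2 ^ 3 : MvPolynomial (Fin 3) K)) ^ n =
      ∑ k ∈ piAntidiag (univ : Finset (Fin 3)) n,
        C (Nat.multinomial univ k : K) * monomial (D k) 1 := by
  have h : (X 0 ^ 3 + X 1 ^ 3 + X 2 ^ 3 : MvPolynomial (Fin 3) K) = ∑ i : Fin 3, X i ^ 3 := by
    rw [Fin.sum_univ_three]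
  rw [h, Finset.sum_pow_eq_sum_piAntidiag]
  refine Finset.sum_congr rfl fun k hk => ?_
  rw [monomial_D]
  simp_rw [← pow_mul]
  rw [map_natCast (C : K →+* MvPolynomial (Fin 3) K)]

lemma coeff_fpow (n : ℕ) (d : Fin 3 →₀ ℕ) :
    coeff d ((X 0 ^ 3 + X 1 ^ 3 + X 2 ^ 3 : MvPolynomial (Fin 3) K) ^ n) =
      ∑ k ∈ piAntidiag (univ : Finset (Fin 3)) n,
        if D k = d then (Nat.multinomial univ k : K) else 0 := by
  classical
  rw [fpow, coeff_sum]
  refine sum_congr rfl fun k _ => ?_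
  rw [coeff_C_mul, coeff_monomial]
  split <;> simp

lemma exists_of_coeff_ne {n : ℕ} {d : Fin 3 →₀ ℕ}
    (h : coeff d ((X 0 ^ 3 + X 1 ^ 3 + X 2 ^ 3 : MvPolynomial (Fin 3) K) ^ n) ≠ 0) :
    ∃ k : Fin 3 → ℕ, k 0 + k 1 + k 2 = n ∧ ∀ i, d i = 3 * k i := by
  classical
  rw [coeff_fpow] at h
  obtain ⟨k, hk, hne⟩ := Finset.exists_ne_zero_of_sum_ne_zero h
  rw [mem_piAntidiag] at hk
  by_cases hD : D k = d
  · exact ⟨k, by rw [← Fin.sum_univ_three k]; exact hk.1,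
      fun i => by rw [← hD]; rfl⟩
  · simp [hD] at hne

lemma coeff_fpow_D (n : ℕ) (k₀ : Fin 3 → ℕ) (hs : k₀ 0 + k₀ 1 + k₀ 2 = n) :
    coeff (D k₀) ((X 0 ^ 3 + X 1 ^ 3 + X 2 ^ 3 : MvPolynomial (Fin 3) K) ^ n) =
      (Nat.multinomial univ k₀ : K) := by
  classical
  rw [coeff_fpow]
  rw [Finset.sum_eq_single_of_mem k₀
    (by rw [mem_piAntidiag]
        exact ⟨by rw [Fin.sum_univ_three]; exact hs, fun _ _ => mem_univ _⟩)]
  · simp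
  · intro k hk hne
    rw [if_neg]
    intro hD
    apply hne
    funext i
    have := DFunLike.congr_fun hD i
    rw [D_apply, D_apply] at this
    omega

lemma mem_J_iff (g : MvPolynomial (Fin 3) K) (p : ℕ) :
    g ∈ Ideal.span {(X 0 : MvPolynomial (Fin 3) K) ^ p, X 1 ^ p, X 2 ^ p} ↔
      ∀ d ∈ g.support, ∃ i : Fin 3, p ≤ d i := by
  have hset : ({X 0 ^ p, X 1 ^ p, X 2 ^ p} : Set (MvPolynomial (Fin 3) K)) =
      (fun s => monomial s (1 : K)) ''
        ({Finsupp.single 0 p, Finsupp.single 1 p, Finsupp.single 2 p} : Set (Fin 3 →₀ ℕ)) := by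
    rw [Set.image_insert_eq, Set.image_insert_eq, Set.image_singleton,
      ← X_pow_eq_monomial, ← X_pow_eq_monomial, ← X_pow_eq_monomial]
  rw [hset, mem_ideal_span_monomial_image]
  constructor
  · intro h d hd
    obtain ⟨si, hsi, hle⟩ := h d hd
    simp only [Set.mem_insert_iff, Set.mem_singleton_iff] at hsi
    rcases hsi with h0 | h1 | h2
    · exact ⟨0, by simpa [h0, Finsupp.single_le_iff] using hle⟩
    · exact ⟨1, by simpa [h1, Finsupp.single_le_iff] using hle⟩
    · exact ⟨2, by simpa [h2, Finsupp.single_le_iff] using hle⟩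
  · intro h d hd
    obtain ⟨i, hi⟩ := h d hd
    refine ⟨Finsupp.single i p, ?_, Finsupp.single_le_iff.mpr hi⟩
    fin_cases i
    · exact Or.inl rfl
    · exact Or.inr (Or.inl rfl)
    · exact Or.inr (Or.inr rfl)

lemma frobPow_m (p : ℕ) [Fact p.Prime] [CharP K p] :
    frobPow (Ideal.span {(X 0 : MvPolynomial (Fin 3) K), X 1, X 2}) p =
      Ideal.span {(X 0 : MvPolynomial (Fin 3) K) ^ p, X 1 ^ p, X 2 ^ p} := by
  have h1 : frobPow (Ideal.span {(X 0 : MvPolynomial (Fin 3) K), X 1, X 2}) p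
      = Ideal.map (frobenius (MvPolynomial (Fin 3) K) p)
          (Ideal.span {X 0, X 1, X 2}) := by
    rfl
  rw [h1, Ideal.map_span]
  congr 1
  rw [Set.image_insert_eq, Set.image_insert_eq, Set.image_singleton]
  simp [frobenius_def]

end Stmt19Aux

open MvPolynomial Finset Stmt19Aux in
/-- For `R = K[x,y,z]` with `K` an `F`-finite field of characteristic `p > 3`,
`f = x³ + y³ + z³` and `m = (x,y,z)`: `(m^{[p]} : f^{p−1}) = m` if `p ≡ 1 mod 3`,
and `(m^{[p]} : f^{p−1}) = R` if `p ≡ 2 mod 3`. -/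
theorem stmt19 {K : Type*} [Field K]
    (p : ℕ) [Fact p.Prime] [CharP K p] [ExpChar K p] (hp3 : 3 < p)
    (hFfin : @Module.Finite K K _ _ (Module.compHom K (frobenius K p))) :
    let R := MvPolynomial (Fin 3) K
    let f : R := X 0 ^ 3 + X 1 ^ 3 + X 2 ^ 3
    let m : Ideal R := Ideal.span {X 0, X 1, X 2}
    (p % 3 = 1 → (frobPow m p).colon (Ideal.span {f ^ (p - 1)}) = m) ∧
    (p % 3 = 2 → (frobPow m p).colon (Ideal.span {f ^ (p - 1)}) = ⊤) := by
  classical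
  intro R f m
  have hf : f = X 0 ^ 3 + X 1 ^ 3 + X 2 ^ 3 := rfl
  have hJ : frobPow m p = Ideal.span {(X 0 : R) ^ p, X 1 ^ p, X 2 ^ p} := frobPow_m p
  constructor
  · -- p ≡ 1 mod 3
    intro h1
    obtain ⟨t, ht⟩ : ∃ t, p - 1 = 3 * t := ⟨(p - 1) / 3, by omega⟩
    apply le_antisymm
    · -- colon ≤ m
      intro g hg
      rw [Ideal.mem_colon_span_singleton, hf, hJ, mem_J_iff] at hg
      have hm : m = Ideal.span (X '' (Set.univ : Set (Fin 3))) := by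
        have hset : (X '' (Set.univ : Set (Fin 3)) : Set R) = {X 0, X 1, X 2} := by
          rw [Set.image_univ]
          ext q
          simp only [Set.mem_range, Set.mem_insert_iff, Set.mem_singleton_iff]
          constructor
          · rintro ⟨i, rfl⟩
            fin_cases i
            · exact Or.inl rfl
            · exact Or.inr (Or.inl rfl)
            · exact Or.inr (Or.inr rfl)
          · rintro (rfl | rfl | rfl)
            exacts [⟨0, rfl⟩, ⟨1, rfl⟩, ⟨2, rfl⟩]
        rw [hset]
      rw [hm, mem_ideal_span_X_image]
      intro d hd
      by_contra hcon
      push_neg at hcon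
      have hd0 : d = 0 := by
        ext i
        simpa using hcon i (Set.mem_univ i)
      rw [hd0, mem_support_iff] at hd
      -- hd : coeff 0 g ≠ 0
      have hzero : coeff (D fun _ => t)
          (g * (X 0 ^ 3 + X 1 ^ 3 + X 2 ^ 3 : R) ^ (p - 1)) = 0 := by
        by_contra h
        obtain ⟨i, hi⟩ := hg _ (mem_support_iff.mpr h)
        rw [D_apply] at hi
        omega
      rw [coeff_mul, Finset.sum_eq_single_of_mem ((0 : Fin 3 →₀ ℕ), D fun _ => t)
        (by rw [Finset.HasAntidiagonal.mem_antidiagonal, zero_add])] at hzero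
      · rw [coeff_fpow_D (p - 1) (fun _ => t) (show t + t + t = p - 1 by omega)] at hzero
        have hnd : ¬ p ∣ Nat.multinomial univ (fun _ : Fin 3 => t) := by
          intro hdvd
          have hspec := Nat.multinomial_spec (univ : Finset (Fin 3)) (fun _ : Fin 3 => t)
          rw [Fin.sum_univ_three] at hspec
          have hdvd2 : Nat.multinomial univ (fun _ : Fin 3 => t) ∣ Nat.factorial (p - 1) := by
            rw [show p - 1 = t + t + t by omega, ← hspec]
            exact Dvd.intro_left _ rfl
          have hple := ((Fact.out : p.Prime).dvd_factorial).mp (hdvd.trans hdvd2)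
          omega
        have hne : (Nat.multinomial univ (fun _ : Fin 3 => t) : K) ≠ 0 := by
          rw [Ne, CharP.cast_eq_zero_iff K p]
          exact hnd
        rcases mul_eq_zero.mp hzero with h | h
        · exact hd h
        · exact hne h
      · rintro ⟨d1, d2⟩ hb hne
        by_contra hprod
        have hc2 : coeff d2 ((X 0 ^ 3 + X 1 ^ 3 + X 2 ^ 3 : R) ^ (p - 1)) ≠ 0 :=
          fun h => hprod (by simp [h])
        obtain ⟨k, hsum, hDk⟩ := exists_of_coeff_ne hc2
        rw [Finset.HasAntidiagonal.mem_antidiagonal] at hb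
        have hap : ∀ i, d1 i + d2 i = 3 * t := fun i => by
          have := DFunLike.congr_fun hb i
          simpa [D_apply] using this
        have hk : ∀ i, k i = t := by
          have e0 := hap 0; have e1 := hap 1; have e2 := hap 2
          rw [hDk 0] at e0; rw [hDk 1] at e1; rw [hDk 2] at e2
          intro i
          fin_cases i
          · show k 0 = t; omega
          · show k 1 = t; omega
          · show k 2 = t; omega
        apply hne
        have hd2 : d2 = D fun _ => t := by
          ext i
          rw [hDk i, hk i, D_apply]
        have hd1 : d1 = 0 := by
          ext i
          have := hap i
          rw [hDk i, hk i] at this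
          simpa using this
        rw [hd1, hd2]
    · -- m ≤ colon
      have key : ∀ j : Fin 3, (X j : R) * (X 0 ^ 3 + X 1 ^ 3 + X 2 ^ 3 : R) ^ (p - 1)
          ∈ frobPow m p := by
        intro j
        rw [hJ, mem_J_iff]
        intro d hd
        rw [mem_support_iff, coeff_X_mul'] at hd
        by_cases hjs : j ∈ d.support
        swap
        · rw [if_neg hjs] at hd; exact absurd rfl hd
        rw [if_pos hjs] at hd
        obtain ⟨k, hsum, hDk⟩ := exists_of_coeff_ne hd
        have hj1 : 1 ≤ d j := by
          rw [Finsupp.mem_support_iff] at hjs; omega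
        have happ : ∀ i, d i - (if j = i then 1 else 0) = 3 * k i := by
          intro i
          have := hDk i
          rwa [Finsupp.tsub_apply, Finsupp.single_apply] at this
        by_contra hcon
        push_neg at hcon
        have c0 := hcon 0; have c1 := hcon 1; have c2 := hcon 2
        have e0 := happ 0; have e1 := happ 1; have e2 := happ 2
        fin_cases j <;> simp [Fin.ext_iff] at e0 e1 e2 hj1 <;> omega
      rw [Ideal.span_le]
      rintro x (rfl | rfl | rfl) <;>
      · rw [SetLike.mem_coe, Ideal.mem_colon_span_singleton, hf]
        first
        | exact key 0
        | exact key 1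
        | exact key 2
  · -- p ≡ 2 mod 3
    intro h2
    rw [Ideal.eq_top_iff_one, Ideal.mem_colon_span_singleton, one_mul, hf, hJ, mem_J_iff]
    intro d hd
    obtain ⟨k, hsum, hDk⟩ := exists_of_coeff_ne (mem_support_iff.mp hd)
    by_contra hcon
    push_neg at hcon
    have c0 := hcon 0; have c1 := hcon 1; have c2 := hcon 2
    rw [hDk 0] at c0; rw [hDk 1] at c1; rw [hDk 2] at c2
    omega
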